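/- Let X be a locally complete real locally convex space, and let (x_n) be a bounded sequence in X which is an l¹-sequence, witnessed by a continuous seminorm ρ on X and δ > 0 (i.e. δ·Σ_{i=1}^n |c_i| ≤ ρ(Σ_{i=1}^n c_i x_i) for all n and reals c_i). Then there exists a continuous linear topological embedding φ : l¹ → X such that φ(e_n) = x_n for every n, and moreover ρ(φ(α)) ≥ δ·‖α‖₁ for every α ∈ l¹. -/

import Mathlib

open Filter Topology
open Set Pointwise

set_option maxHeartbeats 1000000

section Aux
variable {X : Type*} [AddCommGroup X] [Module ℝ X] {T : Set X}

lemma aux_zero_mem_smul {r : ℝ} (h0 : (0 : X) ∈ T) : (0 : X) ∈ r • T :=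
  ⟨0, h0, smul_zero r⟩

lemma aux_smul_mem (hb : Balanced ℝ T) {c : ℝ} {z : X} (hz : z ∈ T) : c • z ∈ |c| • T := by
  rcases eq_or_ne c 0 with rfl | hc
  · have h0 : (0 : X) ∈ T := by
      simpa using hb.smul_mem (a := (0 : ℝ)) (by simp) hz
    simpa using aux_zero_mem_smul (r := |(0:ℝ)|) h0
  · refine ⟨(|c|⁻¹ * c) • z, hb.smul_mem ?_ hz, ?_⟩
    · rw [Real.norm_eq_abs, abs_mul, abs_inv, abs_abs, inv_mul_cancel₀ (abs_ne_zero.2 hc)]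
    · show |c| • ((|c|⁻¹ * c) • z) = c • z
      rw [smul_smul, ← mul_assoc, mul_inv_cancel₀ (abs_ne_zero.2 hc), one_mul]

lemma aux_add_mem (hc : Convex ℝ T) {p q : ℝ} (hp : 0 ≤ p) (hq : 0 ≤ q) {a b : X}
    (ha : a ∈ p • T) (hb : b ∈ q • T) : a + b ∈ (p + q) • T := by
  rw [hc.add_smul hp hq]
  exact Set.add_mem_add ha hb

lemma aux_smul_subset (hb : Balanced ℝ T) {p q : ℝ} (hp : 0 ≤ p) (hpq : p ≤ q) :
    p • T ⊆ q • T := by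
  rcases eq_or_lt_of_le (hp.trans hpq) with hq | hq
  · obtain rfl : p = 0 := le_antisymm (hpq.trans hq.symm.le) hp
    rw [← hq]
  · have : p • T = q • ((q⁻¹ * p) • T) := by
      rw [smul_smul, ← mul_assoc, mul_inv_cancel₀ hq.ne', one_mul]
    rw [this]
    refine smul_set_mono (hb (q⁻¹ * p) ?_)
    rw [Real.norm_eq_abs, abs_mul, abs_inv, abs_of_pos hq, abs_of_nonneg hp]
    rw [← div_eq_inv_mul, div_le_one hq]
    exact hpq

lemma aux_sum_mem (hbal : Balanced ℝ T) (hconv : Convex ℝ T) (h0 : (0 : X) ∈ T)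
    {ι : Type*} (t : Finset ι) (c : ι → ℝ) (z : ι → X) (hz : ∀ i ∈ t, z i ∈ T) :
    ∑ i ∈ t, c i • z i ∈ (∑ i ∈ t, |c i|) • T := by
  classical
  induction t using Finset.cons_induction with
  | empty => simpa using aux_zero_mem_smul (r := (0:ℝ)) h0
  | cons a s ha ih =>
    rw [Finset.sum_cons, Finset.sum_cons, add_comm (c a • z a), add_comm (|c a|)]
    exact aux_add_mem hconv (Finset.sum_nonneg fun i _ => abs_nonneg _) (abs_nonneg _)
      (ih fun i hi => hz i (Finset.mem_cons_of_mem hi)) (aux_smul_mem hbal (hz a (Finset.mem_cons_self a s)))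

lemma aux_neg_mem (hb : Balanced ℝ T) {r : ℝ} {z : X} (hz : z ∈ r • T) : -z ∈ r • T := by
  obtain ⟨w, hw, rfl⟩ := hz
  refine ⟨-w, ?_, smul_neg r w⟩
  simpa using hb.smul_mem (a := (-1 : ℝ)) (by simp) hw

end Aux

/-- The Banach space `l¹` of absolutely summable real sequences. -/
noncomputable abbrev ellOne : Type := ↥(lp (fun _ : ℕ => ℝ) 1)

/-- The standard unit vector basis of `l¹`. -/
noncomputable def stdBasis (n : ℕ) : ellOne := lp.single 1 n (1 : ℝ)

/-- A real locally convex space is locally complete if for every closed bounded disk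
`S`, the span of `S` is (sequentially) complete with respect to the gauge of `S`. -/
def LocallyComplete (X : Type*) [AddCommGroup X] [Module ℝ X] [TopologicalSpace X] :
    Prop :=
  ∀ S : Set X, IsClosed S → Bornology.IsVonNBounded ℝ S → Balanced ℝ S → Convex ℝ S →
    ∀ x : ℕ → X, (∀ n, x n ∈ Submodule.span ℝ S) →
      (∀ ε : ℝ, 0 < ε → ∃ N : ℕ, ∀ m ≥ N, ∀ n ≥ N, gauge S (x m - x n) < ε) →
      ∃ l ∈ Submodule.span ℝ S,
        Tendsto (fun n => gauge S (x n - l)) atTop (𝓝 0)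

section EllOne

lemma ellOne_hasSum_abs (α : ellOne) : HasSum (fun i => |α i|) ‖α‖ := by
  have h := lp.hasSum_norm (p := 1) (by norm_num) α
  simpa using h

lemma ellOne_partial_le (α : ellOne) (n : ℕ) :
    ∑ i ∈ Finset.range n, |α i| ≤ ‖α‖ :=
  sum_le_hasSum _ (fun i _ => abs_nonneg _) (ellOne_hasSum_abs α)

lemma stdBasis_apply_self (n : ℕ) : (stdBasis n) n = 1 := by
  unfold stdBasis
  exact lp.single_apply_self (E := fun _ : ℕ => ℝ) 1 n (1 : ℝ)

lemma stdBasis_apply_ne {n j : ℕ} (h : j ≠ n) : (stdBasis n) j = 0 := by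
  unfold stdBasis
  exact lp.single_apply_ne (E := fun _ : ℕ => ℝ) 1 n (1 : ℝ) h

lemma stdBasis_injective : Function.Injective stdBasis := by
  intro n m h
  by_contra hnm
  have h1 : (stdBasis n) n = 1 := stdBasis_apply_self n
  have h2 : (stdBasis m) n = 0 := stdBasis_apply_ne (Ne.symm (by exact fun hh => hnm hh.symm))
  rw [h] at h1
  rw [h1] at h2
  norm_num at h2

lemma stdBasis_linearIndependent : LinearIndependent ℝ stdBasis := by
  rw [linearIndependent_iff']
  intro t g hg i hi
  have h := congrArg (fun f : ellOne => f i) hg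
  simp only [lp.coeFn_sum, Finset.sum_apply] at h
  have h2 : ∀ j ∈ t, ((g j • stdBasis j : ellOne) i) = g j * (stdBasis j) i := fun j _ => by
    rw [lp.coeFn_smul]; rfl
  rw [Finset.sum_congr rfl h2] at h
  have h0 : ((0 : ellOne) : ℕ → ℝ) i = (0 : ℝ) := rfl
  rw [h0] at h
  rwa [Finset.sum_eq_single i
    (fun j _ hji => by rw [stdBasis_apply_ne (Ne.symm hji), mul_zero])
    (fun hh => absurd hi hh), stdBasis_apply_self, mul_one] at h

end EllOne

/-- In a locally complete real locally convex space, every bounded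
`l¹`-sequence `(xₙ)` (witnessed by a continuous seminorm `ρ` and `δ > 0`) spans a copy
of `l¹`: there is a continuous linear topological embedding `φ : l¹ → X` with
`φ(eₙ) = xₙ` and `ρ(φ(α)) ≥ δ·‖α‖₁` for all `α ∈ l¹`. -/
theorem l1_sequence_spans_l1_of_locallyComplete
    {X : Type*} [AddCommGroup X] [Module ℝ X] [TopologicalSpace X]
    [IsTopologicalAddGroup X] [ContinuousSMul ℝ X] [LocallyConvexSpace ℝ X]
    (hX : LocallyComplete X)
    (x : ℕ → X) (hbd : Bornology.IsVonNBounded ℝ (Set.range x))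
    (ρ : Seminorm ℝ X) (hρ : Continuous ρ) (δ : ℝ) (hδ : 0 < δ)
    (hl1 : ∀ (n : ℕ) (c : ℕ → ℝ),
      δ * ∑ i ∈ Finset.range n, |c i| ≤ ρ (∑ i ∈ Finset.range n, c i • x i)) :
    ∃ φ : ellOne →L[ℝ] X, IsEmbedding φ ∧ (∀ n : ℕ, φ (stdBasis n) = x n) ∧
      ∀ α : ellOne, δ * ‖α‖ ≤ ρ (φ α) := by
  classical
  set B : Set X := Set.range x with hB
  set D : Set X := convexHull ℝ (balancedHull ℝ B) with hD
  set S : Set X := closure D with hS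
  have hxS : ∀ n, x n ∈ S := fun n =>
    subset_closure (subset_convexHull ℝ _ (subset_balancedHull ℝ ⟨n, rfl⟩))
  have hbalS : Balanced ℝ S := ((balancedHull.balanced B).convexHull).closure
  have hconvS : Convex ℝ S := (convex_convexHull ℝ _).closure
  have h0S : (0 : X) ∈ S := by
    simpa using hbalS.smul_mem (a := (0 : ℝ)) (by simp) (hxS 0)
  -- S is bounded
  have hSbd : Bornology.IsVonNBounded ℝ S := by
    intro U hU
    obtain ⟨C, hC_nhds, hC_closed, hCU⟩ := exists_mem_nhds_isClosed_subset hU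
    obtain ⟨W, ⟨hW_nhds, hW_bal, hW_conv⟩, hWC⟩ :=
      (nhds_hasBasis_absConvex ℝ X).mem_iff.1 hC_nhds
    obtain ⟨c, hc⟩ := absorbs_iff_norm.1 (hbd hW_nhds)
    rw [absorbs_iff_norm]
    refine ⟨max c 1, fun a ha => ?_⟩
    have ha1 : (1 : ℝ) ≤ ‖a‖ := le_trans (le_max_right c 1) ha
    have ha0 : a ≠ 0 := by
      intro h; rw [h, norm_zero] at ha1; linarith
    have h1 : B ⊆ a • W := hc a (le_trans (le_max_left c 1) ha)
    have h2 : D ⊆ a • W := by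
      refine convexHull_min ?_ (hW_conv.smul a)
      exact Balanced.balancedHull_subset_of_subset (hW_bal.smul a) h1
    calc S ⊆ closure (a • W) := closure_mono h2
      _ = a • closure W := closure_smul₀' ha0 W
      _ ⊆ a • C := smul_set_mono (hC_closed.closure_subset_iff.2 hWC)
      _ ⊆ a • U := smul_set_mono hCU
  -- ρ is bounded on S
  obtain ⟨M, hM0, hMS⟩ : ∃ M > 0, ∀ z ∈ S, ρ z ≤ M := by
    have hball : {z : X | ρ z < 1} ∈ 𝓝 (0 : X) := by
      have : IsOpen {z : X | ρ z < 1} := isOpen_lt hρ continuous_const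
      exact this.mem_nhds (by simp [map_zero])
    obtain ⟨c, hc⟩ := absorbs_iff_norm.1 (hSbd hball)
    refine ⟨max c 1, lt_of_lt_of_le one_pos (le_max_right c 1), fun z hz => ?_⟩
    have hm1 : (1 : ℝ) ≤ max c 1 := le_max_right c 1
    have hsub : S ⊆ (max c 1) • {z : X | ρ z < 1} := by
      refine hc (max c 1) ?_
      rw [Real.norm_eq_abs, abs_of_nonneg (by linarith)]
      exact le_max_left c 1
    obtain ⟨w, hw, rfl⟩ := hsub hz
    have : ρ ((max c 1) • w) = |max c 1| * ρ w := by
      rw [map_smul_eq_mul, Real.norm_eq_abs]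
    rw [this, abs_of_nonneg (by linarith)]
    calc (max c 1) * ρ w ≤ (max c 1) * 1 := by
          exact mul_le_mul_of_nonneg_left (le_of_lt hw) (by linarith)
      _ = max c 1 := mul_one _
  have hρ_smulS : ∀ (r : ℝ) (z : X), 0 ≤ r → z ∈ r • S → ρ z ≤ r * M := by
    rintro r z hr ⟨w, hw, rfl⟩
    rw [map_smul_eq_mul, Real.norm_eq_abs, abs_of_nonneg hr]
    exact mul_le_mul_of_nonneg_left (hMS w hw) hr
  -- members of εS are small
  have hmemU : ∀ U ∈ 𝓝 (0 : X), ∃ ε : ℝ, 0 < ε ∧ ε • S ⊆ U := by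
    intro U hU
    obtain ⟨c, hc⟩ := absorbs_iff_norm.1 (hSbd hU)
    set a : ℝ := max c 1 with ha
    have ha1 : (1 : ℝ) ≤ a := le_max_right c 1
    have haS : S ⊆ a • U := hc a (by rw [Real.norm_eq_abs, abs_of_nonneg (by linarith)]; exact le_max_left c 1)
    refine ⟨a⁻¹, by positivity, ?_⟩
    intro z hz
    have : a⁻¹ • S ⊆ a⁻¹ • (a • U) := smul_set_mono haS
    have h2 : a⁻¹ • (a • U) = U := by
      rw [smul_smul, inv_mul_cancel₀ (by positivity), one_smul]
    rw [← h2]; exact this hz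
  -- partial sums
  set s : ellOne → ℕ → X := fun α n => ∑ i ∈ Finset.range n, (α i) • x i with hs
  have hsmem : ∀ (c : ℕ → ℝ) (t : Finset ℕ),
      ∑ i ∈ t, c i • x i ∈ (∑ i ∈ t, |c i|) • S :=
    fun c t => aux_sum_mem hbalS hconvS h0S t c x (fun i _ => hxS i)
  -- Lim predicate
  set Lim : ellOne → X → Prop :=
    fun α l => ∀ ε : ℝ, 0 < ε → ∃ N, ∀ n ≥ N, l - s α n ∈ ε • S with hLim
  have span_mem_smul : ∀ z ∈ Submodule.span ℝ S, ∃ r : ℝ, 0 < r ∧ z ∈ r • S := by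
    intro z hz
    induction hz using Submodule.span_induction with
    | mem w hw => exact ⟨1, one_pos, ⟨w, hw, one_smul ℝ w⟩⟩
    | zero => exact ⟨1, one_pos, aux_zero_mem_smul h0S⟩
    | add u v hu hv ihu ihv =>
      obtain ⟨r, hr, hmr⟩ := ihu
      obtain ⟨r', hr', hmr'⟩ := ihv
      exact ⟨r + r', by positivity, aux_add_mem hconvS hr.le hr'.le hmr hmr'⟩
    | smul a u hu ihu =>
      obtain ⟨r, hr, hmr⟩ := ihu
      refine ⟨|a| * r + 1, by positivity, ?_⟩
      have h1 : a • u ∈ |a| • (r • S) := aux_smul_mem (hbalS.smul r) hmr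
      rw [smul_smul] at h1
      exact aux_smul_subset hbalS (by positivity) (by linarith) h1
  have hgauge_mem : ∀ z : X, z ∈ Submodule.span ℝ S → ∀ ε : ℝ, 0 < ε →
      gauge S z < ε → z ∈ ε • S := by
    intro z hz ε hε hlt
    obtain ⟨r, hr, hmr⟩ := span_mem_smul z hz
    have hne : {r : ℝ | 0 < r ∧ z ∈ r • S}.Nonempty := ⟨r, hr, hmr⟩
    obtain ⟨r', ⟨hr'0, hr'm⟩, hr'ε⟩ := exists_lt_of_csInf_lt hne hlt
    exact aux_smul_subset hbalS hr'0.le hr'ε.le hr'm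
  -- existence of limits
  have hspan : ∀ α n, s α n ∈ Submodule.span ℝ S := by
    intro α n
    exact Submodule.sum_mem _ fun i _ =>
      Submodule.smul_mem _ _ (Submodule.subset_span (hxS i))
  have hLim_exists : ∀ α : ellOne, ∃ l, l ∈ Submodule.span ℝ S ∧ Lim α l := by
    intro α
    have hcauchy : ∀ ε : ℝ, 0 < ε → ∃ N : ℕ, ∀ m ≥ N, ∀ n ≥ N,
        gauge S (s α m - s α n) < ε := by
      intro ε hε
      have hcs : CauchySeq (fun n => ∑ i ∈ Finset.range n, |α i|) :=
        ((ellOne_hasSum_abs α).tendsto_sum_nat).cauchySeq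
      obtain ⟨N, hN⟩ := Metric.cauchySeq_iff.1 hcs (ε / 2) (by positivity)
      refine ⟨N, fun m hm n hn => ?_⟩
      -- wlog via cases
      have key : ∀ p q, N ≤ p → N ≤ q → q ≤ p → gauge S (s α p - s α q) < ε := by
        intro p q hp hq hqp
        have heq : s α p - s α q = ∑ i ∈ Finset.Ico q p, (α i) • x i := by
          simp only [hs]
          exact (Finset.sum_Ico_eq_sub _ hqp).symm
        have hmem := hsmem (fun i => α i) (Finset.Ico q p)
        rw [← heq] at hmem
        have hsum : ∑ i ∈ Finset.Ico q p, |α i| < ε / 2 := by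
          have hd := hN p hp q hq
          rw [Real.dist_eq] at hd
          have heq2 : ∑ i ∈ Finset.Ico q p, |α i|
              = ∑ i ∈ Finset.range p, |α i| - ∑ i ∈ Finset.range q, |α i| :=
            Finset.sum_Ico_eq_sub _ hqp
          rw [heq2]
          set Ap := ∑ i ∈ Finset.range p, |α i| with hAp
          set Bq := ∑ i ∈ Finset.range q, |α i| with hBq
          calc Ap - Bq ≤ |Ap - Bq| := le_abs_self _
            _ < ε / 2 := hd
        calc gauge S (s α p - s α q) ≤ ∑ i ∈ Finset.Ico q p, |α i| :=
              gauge_le_of_mem (Finset.sum_nonneg fun i _ => abs_nonneg _) hmem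
          _ < ε / 2 := hsum
          _ < ε := by linarith
      rcases le_total n m with h | h
      · exact key m n hm hn h
      · have h2 := key n m hn hm h
        rw [← neg_sub (s α n) (s α m), gauge_neg (fun z hz => hbalS.neg_mem_iff.2 hz)]
        exact h2
    obtain ⟨l, hl_span, hl_tend⟩ := hX S isClosed_closure hSbd hbalS hconvS (s α)
      (hspan α) hcauchy
    refine ⟨l, hl_span, fun ε hε => ?_⟩
    obtain ⟨N, hN⟩ := eventually_atTop.1 (hl_tend.eventually_lt_const hε)
    refine ⟨N, fun n hn => ?_⟩
    have hmem : s α n - l ∈ ε • S :=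
      hgauge_mem _ (Submodule.sub_mem _ (hspan α n) hl_span) ε hε (hN n hn)
    have := aux_neg_mem hbalS hmem
    rwa [neg_sub] at this
  -- basic Lim facts
  have hLim_zero_mem : ∀ ε : ℝ, (0 : X) ∈ ε • S := fun ε => aux_zero_mem_smul h0S
  have hLim_basis : ∀ n, Lim (stdBasis n) (x n) := by
    intro n ε hε
    refine ⟨n + 1, fun m hm => ?_⟩
    have hsn : s (stdBasis n) m = x n := by
      simp only [hs]
      rw [Finset.sum_eq_single n
        (fun j _ hj => by rw [stdBasis_apply_ne hj, zero_smul])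
        (fun hns => absurd (Finset.mem_range.2 (by omega)) hns)]
      rw [stdBasis_apply_self, one_smul]
    rw [hsn, sub_self]
    exact hLim_zero_mem ε
  have hLim_congr : ∀ α l l', Lim α l → (∀ ε : ℝ, 0 < ε → l' - l ∈ ε • S) → Lim α l' := by
    intro α l l' hl hd ε hε
    obtain ⟨N, hN⟩ := hl (ε / 2) (by positivity)
    refine ⟨N, fun n hn => ?_⟩
    have : l' - s α n = (l' - l) + (l - s α n) := by abel
    rw [this]
    have := aux_add_mem hconvS (by positivity : (0:ℝ) ≤ ε/2) (by positivity : (0:ℝ) ≤ ε/2)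
      (hd (ε/2) (by positivity)) (hN n hn)
    rwa [add_halves] at this
  have hLim_add : ∀ α β l m, Lim α l → Lim β m → Lim (α + β) (l + m) := by
    intro α β l m hα hβ ε hε
    obtain ⟨N1, hN1⟩ := hα (ε / 2) (by positivity)
    obtain ⟨N2, hN2⟩ := hβ (ε / 2) (by positivity)
    refine ⟨max N1 N2, fun n hn => ?_⟩
    have hsum : s (α + β) n = s α n + s β n := by
      simp only [hs]
      rw [← Finset.sum_add_distrib]
      refine Finset.sum_congr rfl fun i _ => ?_
      have : (α + β) i = α i + β i := by rw [lp.coeFn_add]; rfl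
      rw [this, add_smul]
    have heq : l + m - s (α + β) n = (l - s α n) + (m - s β n) := by
      rw [hsum]; abel
    rw [heq]
    have := aux_add_mem hconvS (by positivity : (0:ℝ) ≤ ε/2) (by positivity : (0:ℝ) ≤ ε/2)
      (hN1 n (le_trans (le_max_left _ _) hn)) (hN2 n (le_trans (le_max_right _ _) hn))
    rwa [add_halves] at this
  have hLim_smul : ∀ (c : ℝ) α l, Lim α l → Lim (c • α) (c • l) := by
    intro c α l hα ε hε
    obtain ⟨N, hN⟩ := hα (ε / (|c| + 1)) (by positivity)
    refine ⟨N, fun n hn => ?_⟩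
    have hsum : s (c • α) n = c • s α n := by
      simp only [hs]
      rw [Finset.smul_sum]
      refine Finset.sum_congr rfl fun i _ => ?_
      have : (c • α) i = c * α i := by rw [lp.coeFn_smul]; rfl
      rw [this, mul_smul]
    have heq : c • l - s (c • α) n = c • (l - s α n) := by
      rw [hsum, smul_sub]
    rw [heq]
    have h1 : c • (l - s α n) ∈ |c| • ((ε / (|c| + 1)) • S) :=
      aux_smul_mem (hbalS.smul _) (hN n hn)
    rw [smul_smul] at h1
    refine aux_smul_subset hbalS (by positivity) ?_ h1
    rw [mul_div_assoc']
    rw [div_le_iff₀ (by positivity)]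
    have hc1 : |c| ≤ |c| + 1 := by linarith
    calc |c| * ε ≤ (|c| + 1) * ε := by nlinarith [abs_nonneg c]
      _ = ε * (|c| + 1) := mul_comm _ _
  have hLim_unique : ∀ α l l', Lim α l → Lim α l' → ∀ ε : ℝ, 0 < ε → l' - l ∈ ε • S := by
    intro α l l' hl hl' ε hε
    obtain ⟨N1, hN1⟩ := hl (ε / 2) (by positivity)
    obtain ⟨N2, hN2⟩ := hl' (ε / 2) (by positivity)
    set n := max N1 N2
    have heq : l' - l = (l' - s α n) + (-(l - s α n)) := by abel
    rw [heq]
    have := aux_add_mem hconvS (by positivity : (0:ℝ) ≤ ε/2) (by positivity : (0:ℝ) ≤ ε/2)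
      (hN2 n (le_max_right _ _)) (aux_neg_mem hbalS (hN1 n (le_max_left _ _)))
    rwa [add_halves] at this
  -- construct the linear map via a Hamel basis
  have hli : LinearIndepOn ℝ id (Set.range stdBasis) :=
    (linearIndepOn_id_range_iff stdBasis_injective).mpr stdBasis_linearIndependent
  set bas := Module.Basis.extend hli with hbas
  set F : ellOne → X := fun β =>
    if h : ∃ n, stdBasis n = β then x h.choose
    else Classical.choose (hLim_exists β) with hF
  set φ₀ : ellOne →ₗ[ℝ] X := Module.Basis.constr bas ℝ (fun b => F (b : ellOne)) with hφ₀
  have hF_lim : ∀ β : ellOne, Lim β (F β) := by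
    intro β
    simp only [hF]
    split_ifs with h
    · have hn' : stdBasis h.choose = β := h.choose_spec
      have hb := hLim_basis h.choose
      rwa [hn'] at hb
    · exact (Classical.choose_spec (hLim_exists β)).2
  have hφ₀_basis : ∀ n, φ₀ (stdBasis n) = x n := by
    intro n
    have hmem : stdBasis n ∈ hli.extend (Set.subset_univ _) :=
      hli.subset_extend (Set.subset_univ _) ⟨n, rfl⟩
    have h1 : bas ⟨stdBasis n, hmem⟩ = stdBasis n := Module.Basis.extend_apply_self hli _
    have h2 : φ₀ (bas ⟨stdBasis n, hmem⟩) = F (stdBasis n) := Module.Basis.constr_basis bas ℝ _ _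
    rw [h1] at h2
    rw [h2]
    simp only [hF]
    have hex : ∃ m, stdBasis m = stdBasis n := ⟨n, rfl⟩
    rw [dif_pos hex]
    congr 1
    exact stdBasis_injective hex.choose_spec
  -- φ₀ is a gauge-limit of partial sums everywhere
  have hφ₀_lim : ∀ α : ellOne, Lim α (φ₀ α) := by
    set p : Submodule ℝ ellOne :=
      { carrier := {α | Lim α (φ₀ α)}
        add_mem' := fun {a b} ha hb => by
          have := hLim_add a b _ _ ha hb
          rwa [← map_add] at this
        zero_mem' := by
          show Lim 0 (φ₀ 0)
          rw [map_zero]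
          intro ε hε
          refine ⟨0, fun n _ => ?_⟩
          have h0 : s 0 n = 0 := by
            simp only [hs]
            refine Finset.sum_eq_zero fun i _ => ?_
            have : (0 : ellOne) i = 0 := rfl
            rw [this, zero_smul]
          rw [h0, sub_zero]
          exact hLim_zero_mem ε
        smul_mem' := fun c a ha => by
          have := hLim_smul c a _ ha
          rwa [← map_smul] at this }
    have htop : ∀ α : ellOne, α ∈ p := by
      have hspan_eq : Submodule.span ℝ (Set.range bas) = ⊤ := Module.Basis.span_eq bas
      intro α
      have : α ∈ Submodule.span ℝ (Set.range bas) := by rw [hspan_eq]; trivial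
      refine Submodule.span_le.2 ?_ this
      rintro β ⟨i, rfl⟩
      show Lim (bas i) (φ₀ (bas i))
      have hfi : φ₀ (bas i) = F ↑i := Module.Basis.constr_basis bas ℝ _ i
      have hbi : bas i = ↑i := Module.Basis.extend_apply_self hli i
      rw [hfi, hbi]
      exact hF_lim _
    exact htop
  -- quantitative bound: φ₀ α ∈ (‖α‖ + ε) • S
  have hφ₀_mem : ∀ (α : ellOne) (ε : ℝ), 0 < ε → φ₀ α ∈ (‖α‖ + ε) • S := by
    intro α ε hε
    obtain ⟨N, hN⟩ := hφ₀_lim α (ε / 2) (by positivity)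
    have heq : φ₀ α = (φ₀ α - s α N) + s α N := by abel
    rw [heq]
    have h1 : φ₀ α - s α N ∈ (ε / 2) • S := hN N le_rfl
    have h2 : s α N ∈ (∑ i ∈ Finset.range N, |α i|) • S := hsmem _ _
    have h3 := aux_add_mem hconvS (by positivity : (0:ℝ) ≤ ε/2)
      (Finset.sum_nonneg fun i _ => abs_nonneg _) h1 h2
    refine aux_smul_subset hbalS ?_ ?_ h3
    · positivity
    · have := ellOne_partial_le α N
      linarith
  -- norm lower bound
  have hφ₀_norm : ∀ α : ellOne, δ * ‖α‖ ≤ ρ (φ₀ α) := by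
    intro α
    have key : ∀ ε : ℝ, 0 < ε → δ * ‖α‖ ≤ ρ (φ₀ α) + ε := by
      intro ε hε
      -- choose n with partial sum close to ‖α‖ and Lim small
      have htend := (ellOne_hasSum_abs α).tendsto_sum_nat
      have h1 : ∀ᶠ n in atTop, ‖α‖ - ε / (2 * δ) < ∑ i ∈ Finset.range n, |α i| :=
        htend.eventually_const_lt (by
          have : ε / (2 * δ) > 0 := by positivity
          linarith)
      obtain ⟨N1, hN1⟩ := eventually_atTop.1 h1
      obtain ⟨N2, hN2⟩ := hφ₀_lim α (ε / (2 * M)) (by positivity)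
      set n := max N1 N2
      have ha : ‖α‖ - ε / (2 * δ) < ∑ i ∈ Finset.range n, |α i| := hN1 n (le_max_left _ _)
      have hb : φ₀ α - s α n ∈ (ε / (2 * M)) • S := hN2 n (le_max_right _ _)
      have hρ1 : ρ (φ₀ α - s α n) ≤ ε / (2 * M) * M := hρ_smulS _ _ (by positivity) hb
      have hρ2 : ρ (s α n) ≤ ρ (φ₀ α) + ρ (φ₀ α - s α n) := by
        have hsplit := map_add_le_add ρ (φ₀ α) (-(φ₀ α - s α n))
        rw [map_neg_eq_map] at hsplit
        calc ρ (s α n) = ρ (φ₀ α + -(φ₀ α - s α n)) := by congr 1; abel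
          _ ≤ ρ (φ₀ α) + ρ (φ₀ α - s α n) := hsplit
      have hρ3 : ε / (2 * M) * M = ε / 2 := by field_simp
      have hl1' := hl1 n (fun i => α i)
      have : δ * (‖α‖ - ε / (2 * δ)) ≤ δ * ∑ i ∈ Finset.range n, |α i| :=
        mul_le_mul_of_nonneg_left ha.le hδ.le
      have hδε : δ * (ε / (2 * δ)) = ε / 2 := by field_simp
      calc δ * ‖α‖ = δ * (‖α‖ - ε / (2 * δ)) + δ * (ε / (2 * δ)) := by ring
        _ ≤ δ * ∑ i ∈ Finset.range n, |α i| + ε / 2 := by rw [hδε]; linarith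
        _ ≤ ρ (s α n) + ε / 2 := by
            have := hl1 n (fun i => α i)
            simpa [hs] using add_le_add_right this (ε / 2)
        _ ≤ ρ (φ₀ α) + ρ (φ₀ α - s α n) + ε / 2 := by linarith
        _ ≤ ρ (φ₀ α) + ε / 2 + ε / 2 := by
            rw [hρ3] at hρ1; linarith
        _ = ρ (φ₀ α) + ε := by ring
    by_contra hcon
    push_neg at hcon
    have hpos : 0 < (δ * ‖α‖ - ρ (φ₀ α)) / 2 := by linarith
    have := key ((δ * ‖α‖ - ρ (φ₀ α)) / 2) hpos
    linarith
  -- continuity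
  have hφ₀_cont : Continuous φ₀ := by
    refine continuous_of_continuousAt_zero φ₀ ?_
    rw [ContinuousAt, map_zero]
    rw [tendsto_def]
    intro U hU
    obtain ⟨ε, hε, hεS⟩ := hmemU U hU
    have hball : Metric.ball (0 : ellOne) (ε / 2) ⊆ φ₀ ⁻¹' U := by
      intro α hα
      rw [mem_ball_zero_iff] at hα
      have h1 : φ₀ α ∈ (‖α‖ + (ε / 2 - ‖α‖) + ε / 2) • S := by
        rcases eq_or_lt_of_le (norm_nonneg α) with h0 | h0
        · -- α = 0
          have : α = 0 := by rwa [eq_comm, norm_eq_zero] at h0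
          rw [this, map_zero]
          exact hLim_zero_mem _
        · have := hφ₀_mem α (ε / 2 - ‖α‖ + ε / 2) (by linarith)
          rwa [← add_assoc] at this
      have h2 : ‖α‖ + (ε / 2 - ‖α‖) + ε / 2 = ε := by ring
      rw [h2] at h1
      exact hεS h1
    exact Filter.mem_of_superset (Metric.ball_mem_nhds _ (by positivity)) hball
  set φ : ellOne →L[ℝ] X := ⟨φ₀, hφ₀_cont⟩ with hφ
  have hφ_inj : Function.Injective φ₀ := by
    intro a b hab
    have h1 : φ₀ (a - b) = 0 := by rw [map_sub, hab, sub_self]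
    have := hφ₀_norm (a - b)
    rw [h1, map_zero] at this
    have : ‖a - b‖ ≤ 0 := by
      by_contra hc
      push_neg at hc
      nlinarith
    have h2 : a - b = 0 := by
      rw [← norm_eq_zero]
      exact le_antisymm this (norm_nonneg _)
    exact sub_eq_zero.1 h2
  have hφ_emb : IsEmbedding φ₀ := by
    refine ⟨isInducing_iff_nhds.2 fun α => le_antisymm ?_ ?_, hφ_inj⟩
    · exact (hφ₀_cont.tendsto α).le_comap
    · intro t ht
      rw [Metric.mem_nhds_iff] at ht
      obtain ⟨ε, hε, hball⟩ := ht
      rw [Filter.mem_comap]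
      refine ⟨{y : X | ρ (y - φ₀ α) < δ * ε}, ?_, ?_⟩
      · have hopen : IsOpen {y : X | ρ (y - φ₀ α) < δ * ε} :=
          isOpen_lt (hρ.comp (continuous_id.sub continuous_const)) continuous_const
        refine hopen.mem_nhds ?_
        show ρ (φ₀ α - φ₀ α) < δ * ε
        rw [sub_self, map_zero]
        positivity
      · intro y hy
        simp only [Set.mem_preimage, Set.mem_setOf_eq] at hy
        have h1 : φ₀ y - φ₀ α = φ₀ (y - α) := by rw [map_sub]
        rw [h1] at hy
        have h2 : δ * ‖y - α‖ ≤ ρ (φ₀ (y - α)) := hφ₀_norm _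
        have h3 : ‖y - α‖ < ε := by
          by_contra hc
          push_neg at hc
          nlinarith
        apply hball
        rwa [Metric.mem_ball, dist_eq_norm]
  exact ⟨φ, hφ_emb, hφ₀_basis, hφ₀_norm⟩
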